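/- Let (p_n)_{n≥1} be a guided sequence of polynomials over ℂ: deg p_1 ≥ 1, deg p_n ≥ 2 for n ≥ 2, and with α := limsup_{n→∞} 1/(deg p_n) there exist r > 0 and h : ℂ → ℝ satisfying h(z) − α·log|z| → ∞ as |z| → ∞ such that (i) every zero of every p_n lies in the closed disk of radius r centered at 0, and (ii) there exists N > 1 such that for all n ≥ N and all ζ with |ζ| > r, (1/deg p_n)·log⁺|p_n(ζ)| > h(ζ). Assume additionally that there exists a non-empty open set D ⊆ ℂ such that sup_{n≥1} (1/deg p_n)·log⁺|p_n(z)| < ∞ for every z ∈ D. Then the sequence of functions f_n : ℂ → ℝ defined by f_n(z) := (1/(deg p_n · ⋯ · deg p_1))·log⁺|(p_n ∘ ⋯ ∘ p_1)(z)| converges uniformly on ℂ, i.e. there exists g : ℂ → ℝ such that f_n → g uniformly on ℂ. -/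

import Mathlib

open Filter Polynomial

/-- Evaluation of the composition `p_n ∘ ⋯ ∘ p_1` at a point (`p_1` applied first);
for `n = 0` it is the identity. -/
noncomputable def compEval (p : ℕ → Polynomial ℂ) : ℕ → ℂ → ℂ
  | 0, z => z
  | n + 1, z => (p (n + 1)).eval (compEval p n z)

lemma logplus_eq (x : ℝ) (hx : 0 ≤ x) : max 0 (Real.log x) = Real.log (max 1 x) := by
  rcases le_total x 1 with h | h
  · rw [max_eq_left (Real.log_nonpos hx h), max_eq_left h, Real.log_one]
  · rw [max_eq_right (Real.log_nonneg h), max_eq_right h]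

lemma dft_coeff (d : ℕ) (ω : ℂ) (hprim : IsPrimitiveRoot ω (d + 1))
    (s : Polynomial ℂ) (hs : s.natDegree ≤ d) :
    ((d : ℂ) + 1) * s.coeff d = ∑ k ∈ Finset.range (d + 1), s.eval (ω ^ k) * ω ^ k := by
  have hone : ω ^ (d + 1) = 1 := hprim.pow_eq_one
  have heval : ∀ k ∈ Finset.range (d + 1),
      s.eval (ω ^ k) * ω ^ k = ∑ m ∈ Finset.range (d + 1), s.coeff m * (ω ^ (m + 1)) ^ k := by
    intro k _
    rw [eval_eq_sum_range' (lt_of_le_of_lt hs (Nat.lt_succ_self d)), Finset.sum_mul]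
    refine Finset.sum_congr rfl fun m _ => ?_
    rw [mul_assoc, ← pow_mul, ← pow_mul]
    congr 2
    ring
  rw [Finset.sum_congr rfl heval, Finset.sum_comm]
  have hinner : ∀ m ∈ Finset.range (d + 1),
      (∑ k ∈ Finset.range (d + 1), s.coeff m * (ω ^ (m + 1)) ^ k)
        = if m = d then ((d : ℂ) + 1) * s.coeff d else 0 := by
    intro m hm
    rw [← Finset.mul_sum]
    by_cases hmd : m = d
    · subst hmd
      simp only [if_pos rfl, hone, one_pow, Finset.sum_const, Finset.card_range,
        nsmul_eq_mul, mul_comm]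
      push_cast
      ring
    · have hne : ω ^ (m + 1) ≠ 1 := by
        refine hprim.pow_ne_one_of_pos_of_lt (Nat.succ_ne_zero m) ?_
        have := Finset.mem_range.mp hm
        omega
      rw [geom_sum_eq hne]
      have : (ω ^ (m + 1)) ^ (d + 1) = 1 := by
        rw [← pow_mul, mul_comm, pow_mul, hone, one_pow]
      rw [this]
      simp [hmd]
  rw [Finset.sum_congr rfl hinner, Finset.sum_ite_eq' (Finset.range (d + 1))]
  simp

lemma exists_on_circle (q : Polynomial ℂ) (c : ℂ) (ρ : ℝ) (hρ : 0 < ρ) :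
    ∃ z : ℂ, ‖z - c‖ = ρ ∧
      ‖q.leadingCoeff‖ * ρ ^ q.natDegree ≤ ‖q.eval z‖ := by
  set d := q.natDegree with hd
  set ω : ℂ := Complex.exp (2 * Real.pi * Complex.I / ((d + 1 : ℕ) : ℂ)) with hw
  have hprim : IsPrimitiveRoot ω (d + 1) := Complex.isPrimitiveRoot_exp _ (Nat.succ_ne_zero d)
  have habsω : ‖ω‖ = 1 := by
    have h1 : ‖ω‖ ^ (d + 1) = 1 := by
      rw [← norm_pow, hprim.pow_eq_one, norm_one]
    rcases lt_trichotomy (‖ω‖) 1 with hlt | heq | hgt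
    · have := pow_lt_one₀ (norm_nonneg ω) hlt (Nat.succ_ne_zero d)
      rw [h1] at this; exact absurd this (lt_irrefl 1)
    · exact heq
    · have := one_lt_pow₀ hgt (Nat.succ_ne_zero d)
      rw [h1] at this; exact absurd this (lt_irrefl 1)
  set inner : Polynomial ℂ := Polynomial.C (ρ : ℂ) * Polynomial.X + Polynomial.C c with hinner
  have hρC : (ρ : ℂ) ≠ 0 := Complex.ofReal_ne_zero.mpr (ne_of_gt hρ)
  have hin_deg : inner.natDegree = 1 := by
    rw [hinner, natDegree_add_C, natDegree_C_mul_X _ hρC]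
  have hin_lead : inner.leadingCoeff = (ρ : ℂ) := by
    rw [leadingCoeff, hin_deg, hinner]
    simp [coeff_C]
  set s : Polynomial ℂ := q.comp inner with hscomp
  have hs_deg : s.natDegree = d := by
    rw [hscomp, natDegree_comp, hin_deg, mul_one]
  have hs_coeff : s.coeff d = q.leadingCoeff * (ρ : ℂ) ^ d := by
    rw [← hs_deg, coeff_natDegree, hscomp, leadingCoeff_comp (by rw [hin_deg]; exact one_ne_zero),
      hin_lead]
    rw [natDegree_comp, hin_deg, mul_one]
  have hdft := dft_coeff d ω hprim s (le_of_eq hs_deg)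
  rw [hs_coeff] at hdft
  have habs : ((d : ℝ) + 1) * (‖q.leadingCoeff‖ * ρ ^ d)
      ≤ ∑ k ∈ Finset.range (d + 1), ‖(s.eval (ω ^ k))‖ := by
    have h1 : ‖(((d : ℂ) + 1) * (q.leadingCoeff * (ρ : ℂ) ^ d))‖
        = ((d : ℝ) + 1) * (‖q.leadingCoeff‖ * ρ ^ d) := by
      rw [norm_mul, norm_mul, norm_pow]
      congr 2
      · rw [show ((d : ℂ) + 1) = ((d + 1 : ℕ) : ℂ) by push_cast; ring, Complex.norm_natCast]
        push_cast; ring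
      · rw [Complex.norm_real, Real.norm_eq_abs, abs_of_pos hρ]
    calc ((d : ℝ) + 1) * (‖q.leadingCoeff‖ * ρ ^ d)
        = ‖(((d : ℂ) + 1) * (q.leadingCoeff * (ρ : ℂ) ^ d))‖ := h1.symm
      _ = ‖(∑ k ∈ Finset.range (d + 1), s.eval (ω ^ k) * ω ^ k)‖ := by rw [hdft]
      _ ≤ ∑ k ∈ Finset.range (d + 1), ‖(s.eval (ω ^ k) * ω ^ k)‖ :=
          norm_sum_le _ _
      _ = ∑ k ∈ Finset.range (d + 1), ‖(s.eval (ω ^ k))‖ := by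
          refine Finset.sum_congr rfl fun k _ => ?_
          rw [norm_mul, norm_pow, habsω, one_pow, mul_one]
  have hsum : ∑ k ∈ Finset.range (d + 1), (‖q.leadingCoeff‖ * ρ ^ d)
      ≤ ∑ k ∈ Finset.range (d + 1), ‖(s.eval (ω ^ k))‖ := by
    rw [Finset.sum_const, Finset.card_range, nsmul_eq_mul]
    calc ((d + 1 : ℕ) : ℝ) * (‖q.leadingCoeff‖ * ρ ^ d)
        = ((d : ℝ) + 1) * (‖q.leadingCoeff‖ * ρ ^ d) := by push_cast; ring
      _ ≤ _ := habs
  obtain ⟨k, -, hk⟩ := Finset.exists_le_of_sum_le ⟨0, Finset.mem_range.mpr (Nat.succ_pos d)⟩ hsum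
  refine ⟨(ρ : ℂ) * ω ^ k + c, ?_, ?_⟩
  · rw [add_sub_cancel_right, norm_mul, norm_pow, habsω, one_pow, mul_one,
      Complex.norm_real, Real.norm_eq_abs, abs_of_pos hρ]
  · have : s.eval (ω ^ k) = q.eval ((ρ : ℂ) * ω ^ k + c) := by
      rw [hscomp, eval_comp, hinner]
      simp
    rwa [this] at hk

lemma multiset_prod_lower (w : ℂ) (r : ℝ) (hwr : r ≤ ‖w‖) (s : Multiset ℂ)
    (hs : ∀ z ∈ s, ‖z‖ ≤ r) (hr : 0 ≤ r) :
    (‖w‖ - r) ^ Multiset.card s ≤ (s.map fun z => ‖w - z‖).prod := by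
  induction s using Multiset.induction_on with
  | empty => simp
  | cons a t ih =>
    rw [Multiset.map_cons, Multiset.prod_cons, Multiset.card_cons, pow_succ']
    have ha : ‖a‖ ≤ r := hs a (Multiset.mem_cons_self a t)
    have h1 : ‖w‖ - r ≤ ‖w - a‖ := by
      have h0 : ‖w‖ - ‖a‖ ≤ ‖w - a‖ :=
        norm_sub_norm_le w a
      linarith
    have h2 := ih (fun z hz => hs z (Multiset.mem_cons_of_mem hz))
    have hnn : (0:ℝ) ≤ ‖w‖ - r := by linarith
    exact mul_le_mul h1 h2 (pow_nonneg hnn _) (norm_nonneg _)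

lemma multiset_prod_upper (w : ℂ) (r : ℝ) (s : Multiset ℂ)
    (hs : ∀ z ∈ s, ‖z‖ ≤ r) :
    (s.map fun z => ‖w - z‖).prod ≤ (‖w‖ + r) ^ Multiset.card s := by
  induction s using Multiset.induction_on with
  | empty => simp
  | cons a t ih =>
    rw [Multiset.map_cons, Multiset.prod_cons, Multiset.card_cons, pow_succ']
    have ha : ‖a‖ ≤ r := hs a (Multiset.mem_cons_self a t)
    have h1 : ‖w - a‖ ≤ ‖w‖ + r := by
      have := norm_sub_le w a
      linarith
    have h2 := ih (fun z hz => hs z (Multiset.mem_cons_of_mem hz))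
    refine mul_le_mul h1 h2 (Multiset.prod_nonneg ?_) ?_
    · intro x hx
      obtain ⟨z, _, rfl⟩ := Multiset.mem_map.mp hx
      exact norm_nonneg _
    · have hr0 : (0:ℝ) ≤ r := le_trans (norm_nonneg a) ha
      have h3 : (0:ℝ) ≤ ‖w‖ + r := by positivity
      exact h3

lemma eval_factored (q : Polynomial ℂ) (hq : q ≠ 0) (w : ℂ) :
    ‖q.eval w‖
      = ‖q.leadingCoeff‖ * ((q.roots.map fun z => ‖w - z‖).prod)
    ∧ Multiset.card q.roots = q.natDegree := by
  have hsplit : Splits q := IsAlgClosed.splits q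
  constructor
  · conv_lhs => rw [hsplit.eq_prod_roots]
    rw [eval_mul, eval_C, norm_mul, eval_multiset_prod]
    congr 1
    have hmp := map_multiset_prod (normHom : ℂ →*₀ ℝ)
      (Multiset.map (eval w) (Multiset.map (fun a => X - C a) q.roots))
    simp only [normHom_apply] at hmp
    rw [hmp, Multiset.map_map, Multiset.map_map]
    congr 1
    refine Multiset.map_congr rfl fun z _ => ?_
    simp
  · exact IsAlgClosed.card_roots_eq_natDegree

lemma eval_lower (q : Polynomial ℂ) (hq : q ≠ 0) (r : ℝ) (hr : 0 ≤ r)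
    (hroots : ∀ z : ℂ, q.eval z = 0 → ‖z‖ ≤ r)
    (w : ℂ) (hw : r ≤ ‖w‖) :
    ‖q.leadingCoeff‖ * (‖w‖ - r) ^ q.natDegree
      ≤ ‖q.eval w‖ := by
  obtain ⟨heq, hcard⟩ := eval_factored q hq w
  rw [heq, ← hcard]
  have hmem : ∀ z ∈ q.roots, ‖z‖ ≤ r := fun z hz =>
    hroots z ((mem_roots hq).mp hz)
  exact mul_le_mul_of_nonneg_left (multiset_prod_lower w r hw q.roots hmem hr)
    (norm_nonneg _)

lemma eval_upper (q : Polynomial ℂ) (hq : q ≠ 0) (r : ℝ)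
    (hroots : ∀ z : ℂ, q.eval z = 0 → ‖z‖ ≤ r) (w : ℂ) :
    ‖q.eval w‖
      ≤ ‖q.leadingCoeff‖ * (‖w‖ + r) ^ q.natDegree := by
  obtain ⟨heq, hcard⟩ := eval_factored q hq w
  rw [heq, ← hcard]
  have hmem : ∀ z ∈ q.roots, ‖z‖ ≤ r := fun z hz =>
    hroots z ((mem_roots hq).mp hz)
  exact mul_le_mul_of_nonneg_left (multiset_prod_upper w r q.roots hmem)
    (norm_nonneg _)

lemma exists_unif_ball (u : ℕ → ℂ → ℝ) (hu : ∀ n, Continuous (u n)) (D : Set ℂ)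
    (hD : IsOpen D) (hne : D.Nonempty)
    (hbdd : ∀ z ∈ D, ∃ C : ℝ, ∀ n, u n z ≤ C) :
    ∃ (c' : ℂ) (ρ' : ℝ) (m : ℕ), 0 < ρ' ∧
      ∀ z ∈ Metric.closedBall c' ρ', ∀ n, u n z ≤ (m : ℝ) := by
  obtain ⟨c, hc⟩ := hne
  obtain ⟨ε, hε, hball⟩ := Metric.isOpen_iff.mp hD c hc
  set B : Set ℂ := Metric.ball c (ε / 2) with hB
  have hBD : B ⊆ D := fun z hz => hball (Metric.ball_subset_ball (by linarith) hz)
  set E : ℕ → Set ℂ := fun m => {z | ∀ n, u n z ≤ (m : ℝ)} with hE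
  have hEclosed : ∀ m, IsClosed (E m) := by
    intro m
    have : E m = ⋂ n, {z | u n z ≤ (m : ℝ)} := by
      ext z; simp [hE, Set.mem_iInter]
    rw [this]
    exact isClosed_iInter fun n => isClosed_le (hu n) continuous_const
  set F : ℕ → Set ℂ := fun m => E m ∪ Bᶜ with hF
  have hFclosed : ∀ m, IsClosed (F m) := fun m =>
    (hEclosed m).union (isClosed_compl_iff.mpr Metric.isOpen_ball)
  have hFunion : (⋃ m, F m) = Set.univ := by
    ext z
    simp only [Set.mem_iUnion, Set.mem_univ, iff_true]
    by_cases hz : z ∈ B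
    · obtain ⟨C, hC⟩ := hbdd z (hBD hz)
      exact ⟨⌈C⌉₊, Or.inl fun n => le_trans (hC n) (Nat.le_ceil C)⟩
    · exact ⟨0, Or.inr hz⟩
  have hdense := dense_iUnion_interior_of_closed hFclosed hFunion
  obtain ⟨y, hyI, hyB⟩ := hdense.exists_mem_open (show IsOpen B from Metric.isOpen_ball)
    ⟨c, Metric.mem_ball_self (by linarith : (0:ℝ) < ε / 2)⟩
  obtain ⟨m, hym⟩ := Set.mem_iUnion.mp hyI
  have hVopen : IsOpen (interior (F m) ∩ B) := (isOpen_interior.inter Metric.isOpen_ball)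
  have hyV : y ∈ interior (F m) ∩ B := ⟨hym, hyB⟩
  obtain ⟨ε', hε', hball'⟩ := Metric.isOpen_iff.mp hVopen y hyV
  refine ⟨y, ε' / 2, m, by linarith, fun z hz n => ?_⟩
  have hzV : z ∈ interior (F m) ∩ B :=
    hball' (lt_of_le_of_lt (Metric.mem_closedBall.mp hz) (by linarith))
  have hzF : z ∈ F m := interior_subset hzV.1
  rcases hzF with hzE | hzB
  · exact hzE n
  · exact absurd hzV.2 hzB

set_option maxHeartbeats 1000000 in
theorem guided_uniform_convergence
    (p : ℕ → Polynomial ℂ)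
    (hdeg1 : 1 ≤ (p 1).natDegree)
    (hdeg : ∀ n ≥ 2, 2 ≤ (p n).natDegree)
    (α : ℝ)
    (hα : α = Filter.limsup (fun n => (1 : ℝ) / ((p n).natDegree : ℝ)) Filter.atTop)
    (r : ℝ) (hr : 0 < r)
    (h : ℂ → ℝ)
    (hh : Filter.Tendsto (fun z : ℂ => h z - α * Real.log (‖z‖))
      (Filter.comap (fun z : ℂ => ‖z‖) Filter.atTop) Filter.atTop)
    (hzeros : ∀ n ≥ 1, ∀ z : ℂ, (p n).eval z = 0 → ‖z‖ ≤ r)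
    (hguided : ∃ N : ℕ, 1 < N ∧ ∀ n ≥ N, ∀ ζ : ℂ, r < ‖ζ‖ →
      h ζ < (1 / ((p n).natDegree : ℝ)) * max 0 (Real.log (‖(p n).eval ζ‖)))
    (D : Set ℂ) (hD : IsOpen D) (hDne : D.Nonempty)
    (hbdd : ∀ z ∈ D, ∃ C : ℝ, ∀ n ≥ 1,
      (1 / ((p n).natDegree : ℝ)) * max 0 (Real.log (‖(p n).eval z‖)) ≤ C) :
    ∃ g : ℂ → ℝ, TendstoUniformly
      (fun (n : ℕ) (z : ℂ) =>
        (1 / ((∏ i ∈ Finset.Icc 1 n, (p i).natDegree : ℕ) : ℝ)) *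
          max 0 (Real.log (‖compEval p n z‖)))
      g Filter.atTop := by
  classical
  obtain ⟨N, hN1, hgd⟩ := hguided
  -- basic degree facts
  have hd1 : ∀ n, 1 ≤ n → 1 ≤ (p n).natDegree := by
    intro n hn
    rcases eq_or_lt_of_le hn with hh' | hh'
    · rw [← hh']; exact hdeg1
    · exact le_trans (by norm_num) (hdeg n hh')
  have hp0 : ∀ n, 1 ≤ n → p n ≠ 0 := by
    intro n hn h0
    have := hd1 n hn
    rw [h0, natDegree_zero] at this
    omega
  have hapos : ∀ n, 1 ≤ n → 0 < ‖(p n).leadingCoeff‖ := by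
    intro n hn
    rw [norm_pos_iff, Ne, leadingCoeff_eq_zero]
    exact hp0 n hn
  have hdpos : ∀ n, 1 ≤ n → (0:ℝ) < ((p n).natDegree : ℝ) := by
    intro n hn; exact_mod_cast hd1 n hn
  -- helpers for dividing by degrees
  have hdiv : ∀ (dd : ℝ), 0 < dd → ∀ x y : ℝ, x ≤ dd * y → (1/dd) * x ≤ y := by
    intro dd hdd x y hxy
    rw [one_div, inv_mul_le_iff₀ hdd]; linarith
  have hdiv' : ∀ (dd : ℝ), 0 < dd → ∀ x y : ℝ, dd * y ≤ x → y ≤ (1/dd) * x := by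
    intro dd hdd x y hxy
    rw [one_div, le_inv_mul_iff₀ hdd]; linarith
  -- L n
  set L : ℕ → ℝ := fun n =>
    (1 / ((p n).natDegree : ℝ)) * Real.log (‖(p n).leadingCoeff‖) with hLdef
  have hdL : ∀ n, 1 ≤ n →
      ((p n).natDegree : ℝ) * L n = Real.log (‖(p n).leadingCoeff‖) := by
    intro n hn
    have := hdpos n hn
    rw [hLdef]
    field_simp
  -- α nonneg
  have hα0 : 0 ≤ α := by
    rw [hα]
    apply Filter.le_limsup_of_frequently_le
    · exact Filter.Frequently.of_forall (fun n => by positivity)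
    · refine Filter.isBoundedUnder_of ⟨1, fun n => ?_⟩
      rcases Nat.eq_zero_or_pos (p n).natDegree with h0 | h1
      · simp [h0]
      · rw [div_le_one (by exact_mod_cast h1)]
        exact_mod_cast h1
  -- base point
  have hζ : ∃ ζ0 : ℂ, r < ‖ζ0‖ ∧ 1 ≤ ‖ζ0‖ ∧ 0 ≤ h ζ0 := by
    have hev : ∀ᶠ z : ℂ in comap (fun z : ℂ => ‖z‖) atTop,
        0 ≤ h z - α * Real.log (‖z‖) := hh.eventually (eventually_ge_atTop 0)
    rw [Filter.eventually_comap] at hev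
    obtain ⟨A, hA⟩ := Filter.eventually_atTop.mp hev
    set x0 : ℝ := max A (max (r+1) 1) with hx0
    have hx01 : 1 ≤ x0 := le_trans (le_max_right _ _) (le_max_right _ _)
    refine ⟨(x0 : ℂ), ?_, ?_, ?_⟩
    · rw [Complex.norm_real, Real.norm_eq_abs, abs_of_pos (by linarith)]
      have : r + 1 ≤ x0 := le_trans (le_max_left _ _) (le_max_right _ _)
      linarith
    · rw [Complex.norm_real, Real.norm_eq_abs, abs_of_pos (by linarith)]
      exact hx01
    · have habs : ‖(x0 : ℂ)‖ = x0 := by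
        rw [Complex.norm_real, Real.norm_eq_abs, abs_of_pos (by linarith)]
      have h1 := hA x0 (le_max_left _ _) (x0 : ℂ) habs
      rw [habs] at h1
      have hlog0 : 0 ≤ Real.log x0 := Real.log_nonneg hx01
      nlinarith [mul_nonneg hα0 hlog0]
  obtain ⟨ζ0, hζr, hζ1, hζh⟩ := hζ
  -- lower bound on L n
  set c1 : ℝ := Real.log (‖ζ0‖ + r) with hc1def
  have hc1 : ∀ n, N ≤ n → -c1 ≤ L n := by
    intro n hn
    have hn1 : 1 ≤ n := by omega
    have hdn := hdpos n hn1
    have hgn := hgd n hn ζ0 hζr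
    set X : ℝ := ‖((p n).eval ζ0)‖ with hX
    have hmax : 0 < max 0 (Real.log X) := by
      by_contra hcon
      push_neg at hcon
      have : (1 / ((p n).natDegree : ℝ)) * max 0 (Real.log X) ≤ 0 := by
        apply mul_nonpos_of_nonneg_of_nonpos
        · positivity
        · exact hcon
      linarith
    have hlogpos : 0 < Real.log X := by
      rcases lt_max_iff.mp hmax with h' | h'
      · exact absurd h' (lt_irrefl 0)
      · exact h'
    have hlogX : max 0 (Real.log X) = Real.log X := max_eq_right hlogpos.le
    have hXub : X ≤ ‖(p n).leadingCoeff‖ * (‖ζ0‖ + r) ^ (p n).natDegree := 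
      eval_upper (p n) (hp0 n hn1) r (hzeros n hn1) ζ0
    have hXpos : 0 < X := by
      by_contra hcon
      push_neg at hcon
      have hX0 : X = 0 := le_antisymm hcon (norm_nonneg _)
      rw [hX0, Real.log_zero] at hlogpos
      exact lt_irrefl 0 hlogpos
    have hlogub : Real.log X ≤ Real.log (‖(p n).leadingCoeff‖)
        + ((p n).natDegree : ℝ) * Real.log (‖ζ0‖ + r) := by
      calc Real.log X ≤ Real.log (‖(p n).leadingCoeff‖
            * (‖ζ0‖ + r) ^ (p n).natDegree) := Real.log_le_log hXpos hXub
        _ = _ := by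
            rw [Real.log_mul (ne_of_gt (hapos n hn1)) (by positivity), Real.log_pow]
    -- from guided: d * h ζ0 < log X
    have hdh : ((p n).natDegree : ℝ) * h ζ0 ≤ Real.log X := by
      rw [hlogX] at hgn
      have h2 := mul_le_mul_of_nonneg_left hgn.le (le_of_lt hdn)
      rwa [← mul_assoc, mul_one_div_cancel (ne_of_gt hdn), one_mul] at h2
    have hla : -(((p n).natDegree : ℝ) * c1) ≤ Real.log (‖(p n).leadingCoeff‖) := by
      have h0 : 0 ≤ ((p n).natDegree : ℝ) * h ζ0 := mul_nonneg (le_of_lt hdn) hζh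
      rw [hc1def]
      nlinarith
    have := hdiv' _ hdn (Real.log (‖(p n).leadingCoeff‖)) (-c1) (by linarith)
    rw [hLdef]
    exact this
  -- upper bound on L n
  have hc2 : ∃ c2 : ℝ, ∀ n, 1 ≤ n → L n ≤ c2 := by
    set u : ℕ → ℂ → ℝ := fun k z =>
      (1 / ((p (k+1)).natDegree : ℝ)) *
        Real.log (max 1 (‖((p (k+1)).eval z)‖)) with hudef
    have hu_cont : ∀ k, Continuous (u k) := by
      intro k
      apply Continuous.mul continuous_const
      apply Continuous.log
      · exact continuous_const.max (continuous_norm.comp (p (k+1)).continuous)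
      · intro x
        have : (1:ℝ) ≤ max 1 (‖((p (k+1)).eval x)‖) := le_max_left _ _
        positivity
    have hu_bdd : ∀ z ∈ D, ∃ C : ℝ, ∀ k, u k z ≤ C := by
      intro z hz
      obtain ⟨C, hC⟩ := hbdd z hz
      refine ⟨C, fun k => ?_⟩
      have := hC (k+1) (by omega)
      rwa [logplus_eq _ (norm_nonneg _)] at this
    obtain ⟨c', ρ', m, hρ', hball⟩ := exists_unif_ball u hu_cont D hD hDne hu_bdd
    refine ⟨(m : ℝ) - Real.log ρ', fun n hn => ?_⟩
    obtain ⟨z, hzc, hzeval⟩ := exists_on_circle (p n) c' ρ' hρ'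
    have hzball : z ∈ Metric.closedBall c' ρ' := by
      rw [Metric.mem_closedBall, Complex.dist_eq, hzc]
    have hun := hball z hzball (n - 1)
    have hn1 : n - 1 + 1 = n := by omega
    rw [hudef] at hun
    simp only [hn1] at hun
    have hdn := hdpos n hn
    set X : ℝ := ‖((p n).eval z)‖ with hX
    have hXmax : X ≤ max 1 X := le_max_right _ _
    have hlhs_pos : 0 < ‖(p n).leadingCoeff‖ * ρ' ^ (p n).natDegree := by
      have := hapos n hn
      positivity
    have hlog1 : Real.log (‖(p n).leadingCoeff‖)
        + ((p n).natDegree : ℝ) * Real.log ρ' ≤ Real.log (max 1 X) := by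
      calc Real.log (‖(p n).leadingCoeff‖) + ((p n).natDegree : ℝ) * Real.log ρ'
          = Real.log (‖(p n).leadingCoeff‖ * ρ' ^ (p n).natDegree) := by
            rw [Real.log_mul (ne_of_gt (hapos n hn)) (by positivity), Real.log_pow]
        _ ≤ Real.log (max 1 X) :=
            Real.log_le_log hlhs_pos (le_trans hzeval hXmax)
    have hlog2' : Real.log (max 1 X) ≤ ((p n).natDegree : ℝ) * (m : ℝ) := by
      have h2 := mul_le_mul_of_nonneg_left hun (le_of_lt hdn)
      rwa [← mul_assoc, mul_one_div_cancel (ne_of_gt hdn), one_mul] at h2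
    have hla : Real.log (‖(p n).leadingCoeff‖)
        ≤ ((p n).natDegree : ℝ) * ((m : ℝ) - Real.log ρ') := by nlinarith
    exact hdiv _ hdn _ _ hla
  obtain ⟨c2, hc2⟩ := hc2
  -- the constant Λ
  set Λ : ℝ := max (max c1 c2) 0 with hΛdef
  have hΛ0 : 0 ≤ Λ := le_max_right _ _
  have hLup : ∀ n, 1 ≤ n → L n ≤ Λ := fun n hn =>
    le_trans (hc2 n hn) (le_trans (le_max_right c1 c2) (le_max_left _ _))
  have hLlow : ∀ n, N ≤ n → -Λ ≤ L n := fun n hn =>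
    le_trans (neg_le_neg (le_trans (le_max_left c1 c2) (le_max_left _ _))) (hc1 n hn)
  -- the radius R
  set R : ℝ := max (2*r+1) (4 * Real.exp (1 + 2*Λ)) with hRdef
  have hexp1 : (1:ℝ) ≤ Real.exp (1 + 2*Λ) := by
    nlinarith [Real.add_one_le_exp (1 + 2*Λ), hΛ0]
  have hR1 : (1:ℝ) ≤ R := le_trans (by linarith) (le_max_right _ _)
  have hRr : 2*r + 1 ≤ R := le_max_left _ _
  have hRlog : 1 + 2*Λ + 2*Real.log 2 ≤ Real.log R := by
    have h4 : Real.log (4 * Real.exp (1 + 2*Λ)) = 2*Real.log 2 + (1 + 2*Λ) := by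
      rw [Real.log_mul (by norm_num) (ne_of_gt (Real.exp_pos _)), Real.log_exp,
        show (4:ℝ) = 2^2 by norm_num, Real.log_pow]
      push_cast; ring
    calc 1 + 2*Λ + 2*Real.log 2 = Real.log (4 * Real.exp (1 + 2*Λ)) := by rw [h4]; ring
      _ ≤ Real.log R := Real.log_le_log (by positivity) (le_max_right _ _)
  have hlog2 : (0:ℝ) ≤ Real.log 2 := Real.log_nonneg one_le_two
  have hlogR1 : (1:ℝ) ≤ Real.log R := by linarith
  -- constants
  set B1 : ℝ := Λ + Real.log 2 with hB1def
  set B2 : ℝ := Λ + Real.log (R + r) with hB2def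
  have hB1pos : 0 ≤ B1 := by rw [hB1def]; linarith
  have hB2pos : 0 ≤ B2 := by
    have : (0:ℝ) ≤ Real.log (R + r) := Real.log_nonneg (by linarith)
    rw [hB2def]; linarith
  -- growth lemma
  have hRfacts : ∀ x : ℝ, R ≤ x → r ≤ x ∧ 0 < x - r ∧ x/2 ≤ x - r ∧ 1 ≤ x ∧
      Real.log R ≤ Real.log x := by
    intro x hx
    have h1 : r ≤ x := by linarith
    have h4 : 1 ≤ x := le_trans hR1 hx
    exact ⟨h1, by linarith, by linarith, h4,
      Real.log_le_log (by linarith) hx⟩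
  have hlowexp : ∀ n, N ≤ n → ∀ w : ℂ, R ≤ ‖w‖ →
      Real.exp (((p n).natDegree : ℝ) * (L n + Real.log (‖w‖ - r)))
        ≤ ‖((p n).eval w)‖ := by
    intro n hn w hw
    have hn1 : 1 ≤ n := by omega
    obtain ⟨h1, h2, h3, h4, h5⟩ := hRfacts _ hw
    have hlow := eval_lower (p n) (hp0 n hn1) r hr.le (hzeros n hn1) w h1
    calc Real.exp (((p n).natDegree : ℝ) * (L n + Real.log (‖w‖ - r)))
        = ‖(p n).leadingCoeff‖ * (‖w‖ - r) ^ (p n).natDegree := by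
          rw [mul_add, hdL n hn1, Real.exp_add, Real.exp_log (hapos n hn1),
            Real.exp_nat_mul, Real.exp_log h2]
      _ ≤ _ := hlow
  have hclaim : ∀ n, N ≤ n → ∀ w : ℂ, R ≤ ‖w‖ →
      Real.log (‖w‖) + 1
        ≤ ((p n).natDegree : ℝ) * (L n + Real.log (‖w‖ - r)) := by
    intro n hn w hw
    have hn1 : 1 ≤ n := by omega
    obtain ⟨h1, h2, h3, h4, h5⟩ := hRfacts _ hw
    have hd2' : (2:ℝ) ≤ ((p n).natDegree : ℝ) := by
      exact_mod_cast hdeg n (by omega)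
    set x : ℝ := ‖w‖ with hxdef
    have hlogxr : Real.log x - Real.log 2 ≤ Real.log (x - r) := by
      calc Real.log x - Real.log 2 = Real.log (x / 2) := (Real.log_div (by linarith) (by norm_num)).symm
        _ ≤ Real.log (x - r) := Real.log_le_log (by linarith) h3
    have hT1 : Real.log x - Real.log 2 - Λ ≤ L n + Real.log (x - r) := by
      have := hLlow n hn
      linarith
    have hT0 : (0:ℝ) ≤ L n + Real.log (x - r) := by linarith
    have h2T : 2 * (L n + Real.log (x - r)) ≤ ((p n).natDegree : ℝ) * (L n + Real.log (x - r)) :=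
      mul_le_mul_of_nonneg_right hd2' hT0
    linarith
  have hG : ∀ n, N ≤ n → ∀ w : ℂ, R ≤ ‖w‖ →
      Real.exp 1 * ‖w‖ ≤ ‖((p n).eval w)‖ := by
    intro n hn w hw
    obtain ⟨h1, h2, h3, h4, h5⟩ := hRfacts _ hw
    calc Real.exp 1 * ‖w‖
        = Real.exp (Real.log (‖w‖) + 1) := by
          rw [Real.exp_add, Real.exp_log (by linarith), mul_comm]
      _ ≤ Real.exp (((p n).natDegree : ℝ) * (L n + Real.log (‖w‖ - r))) :=
          Real.exp_le_exp.mpr (hclaim n hn w hw)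
      _ ≤ _ := hlowexp n hn w hw
  -- bracket lemma
  have hS : ∀ n, N ≤ n → ∀ w : ℂ, R ≤ ‖w‖ →
      |(1 / ((p n).natDegree : ℝ)) * Real.log (‖((p n).eval w)‖)
        - Real.log (‖w‖)| ≤ B1 := by
    intro n hn w hw
    have hn1 : 1 ≤ n := by omega
    obtain ⟨h1, h2, h3, h4, h5⟩ := hRfacts _ hw
    have hdn := hdpos n hn1
    set x : ℝ := ‖w‖ with hxdef
    set Y : ℝ := ‖((p n).eval w)‖ with hYdef
    have hYpos : 0 < Y := by
      have := hG n hn w hw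
      have hexp := Real.exp_pos 1
      nlinarith
    have hxpos : (0:ℝ) < x := by linarith
    -- upper bound
    have hup : (1 / ((p n).natDegree : ℝ)) * Real.log Y ≤ L n + Real.log (x + r) := by
      apply hdiv _ hdn
      have hlog : Real.log Y ≤ Real.log (‖(p n).leadingCoeff‖)
          + ((p n).natDegree : ℝ) * Real.log (x + r) := by
        calc Real.log Y
            ≤ Real.log (‖(p n).leadingCoeff‖ * (x + r) ^ (p n).natDegree) :=
              Real.log_le_log hYpos (eval_upper (p n) (hp0 n hn1) r (hzeros n hn1) w)
          _ = _ := by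
              rw [Real.log_mul (ne_of_gt (hapos n hn1)) (by positivity), Real.log_pow]
      rw [mul_add, hdL n hn1]
      linarith
    -- lower bound
    have hlo : L n + Real.log (x - r) ≤ (1 / ((p n).natDegree : ℝ)) * Real.log Y := by
      apply hdiv' _ hdn
      have := hlowexp n hn w hw
      have hlog : ((p n).natDegree : ℝ) * (L n + Real.log (x - r)) ≤ Real.log Y := by
        calc ((p n).natDegree : ℝ) * (L n + Real.log (x - r))
            = Real.log (Real.exp (((p n).natDegree : ℝ) * (L n + Real.log (x - r)))) :=
              (Real.log_exp _).symm
          _ ≤ Real.log Y := Real.log_le_log (Real.exp_pos _) this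
      exact hlog
    have hlogxr : Real.log x - Real.log 2 ≤ Real.log (x - r) := by
      calc Real.log x - Real.log 2 = Real.log (x / 2) :=
            (Real.log_div (by linarith) (by norm_num)).symm
        _ ≤ Real.log (x - r) := Real.log_le_log (by linarith) h3
    have hlogxr2 : Real.log (x + r) ≤ Real.log x + Real.log 2 := by
      calc Real.log (x + r) ≤ Real.log (2 * x) := Real.log_le_log (by linarith) (by linarith)
        _ = Real.log 2 + Real.log x := Real.log_mul (by norm_num) (ne_of_gt hxpos)
        _ = _ := by ring
    have hLl := hLlow n hn
    have hLu := hLup n hn1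
    rw [hB1def]
    rw [abs_le]
    constructor
    · linarith
    · linarith
  -- products of degrees
  set Dn : ℕ → ℕ := fun n => ∏ i ∈ Finset.Icc 1 n, (p i).natDegree with hDndef
  have hDsucc : ∀ n, Dn (n+1) = Dn n * (p (n+1)).natDegree := by
    intro n
    rw [hDndef]
    exact Finset.prod_Icc_succ_top (by omega) _
  have hDpos : ∀ n, 0 < Dn n := by
    intro n
    rw [hDndef]
    apply Finset.prod_pos
    intro i hi
    have := hd1 i (Finset.mem_Icc.mp hi).1
    omega
  have hDbound : ∀ n, 1 ≤ n → (1:ℝ) / (Dn n : ℝ) ≤ 2 * (1/2)^n := by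
    intro n hn
    induction n, hn using Nat.le_induction with
    | base =>
      have h1 : (1:ℕ) ≤ Dn 1 := hDpos 1
      have h1' : (1:ℝ) ≤ (Dn 1 : ℝ) := by exact_mod_cast h1
      calc (1:ℝ)/(Dn 1 : ℝ) ≤ 1 := by rw [div_le_one (by linarith)]; exact h1'
        _ = 2 * (1/2)^1 := by norm_num
    | succ n hn ih =>
      have hd2' : (2:ℝ) ≤ ((p (n+1)).natDegree : ℝ) := by exact_mod_cast hdeg (n+1) (by omega)
      have hDnpos : (0:ℝ) < (Dn n : ℝ) := by exact_mod_cast hDpos n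
      have heq : (1:ℝ)/(Dn (n+1) : ℝ) = (1/(Dn n : ℝ)) * (1/((p (n+1)).natDegree : ℝ)) := by
        rw [hDsucc n]
        push_cast
        rw [one_div, one_div, one_div, mul_inv]
      rw [heq]
      have hhalf : (1:ℝ)/((p (n+1)).natDegree : ℝ) ≤ 1/2 :=
        one_div_le_one_div_of_le (by norm_num) hd2'
      calc (1/(Dn n : ℝ)) * (1/((p (n+1)).natDegree : ℝ))
          ≤ (2*(1/2)^n) * (1/2) := by
            apply mul_le_mul ih hhalf (by positivity) (by positivity)
        _ = 2 * (1/2)^(n+1) := by ring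
  -- the functions
  set f : ℕ → ℂ → ℝ := fun n z =>
    (1 / ((∏ i ∈ Finset.Icc 1 n, (p i).natDegree : ℕ) : ℝ)) *
      max 0 (Real.log (‖compEval p n z‖)) with hfdef
  have hfD : ∀ n z, f n z = (1 / (Dn n : ℝ)) * max 0 (Real.log (‖compEval p n z‖)) :=
    fun n z => rfl
  have hf0 : ∀ n z, 0 ≤ f n z := by
    intro n z
    rw [hfD]
    have := hDpos n
    positivity
  have hpowmono : ∀ a b : ℕ, a ≤ b → ((1:ℝ)/2)^b ≤ (1/2)^a := fun a b hab =>
    pow_le_pow_of_le_one (by norm_num) (by norm_num) hab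
  have hpownn : ∀ a : ℕ, (0:ℝ) ≤ (1/2)^a := fun a => by positivity
  -- small orbit bound
  have hsmall : ∀ n, 1 ≤ n → ∀ z : ℂ, ‖compEval p n z‖ ≤ R →
      f n z ≤ 2 * Real.log R * (1/2)^n := by
    intro n hn z hz
    rw [hfD]
    have hmax : max 0 (Real.log (‖compEval p n z‖)) ≤ Real.log R := by
      rw [logplus_eq _ (norm_nonneg _)]
      have hpos : (0:ℝ) < max 1 (‖compEval p n z‖) :=
        lt_of_lt_of_le one_pos (le_max_left _ _)
      exact Real.log_le_log hpos (max_le hR1 hz)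
    have hDnn : (0:ℝ) ≤ 1 / (Dn n : ℝ) := by
      have : (0:ℝ) < (Dn n : ℝ) := by exact_mod_cast hDpos n
      positivity
    calc (1 / (Dn n : ℝ)) * max 0 (Real.log (‖compEval p n z‖))
        ≤ (1 / (Dn n : ℝ)) * Real.log R := mul_le_mul_of_nonneg_left hmax hDnn
      _ ≤ (2*(1/2)^n) * Real.log R :=
          mul_le_mul_of_nonneg_right (hDbound n hn) (by linarith)
      _ = 2 * Real.log R * (1/2)^n := by ring
  -- crossing bound
  have hcross : ∀ t, 1 ≤ t → ∀ z : ℂ, ‖compEval p t z‖ ≤ R →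
      f (t+1) z ≤ 2 * B2 * (1/2)^t := by
    intro t ht z hz
    have ht1 : 1 ≤ t + 1 := by omega
    set w : ℂ := compEval p t z with hwdef
    have hFt : compEval p (t+1) z = (p (t+1)).eval w := rfl
    set dd : ℕ := (p (t+1)).natDegree with hdddef
    have hddpos : (0:ℝ) < (dd : ℝ) := hdpos (t+1) ht1
    have habs : ‖((p (t+1)).eval w)‖ ≤ Real.exp ((dd:ℝ) * B2) := by
      calc ‖((p (t+1)).eval w)‖
          ≤ ‖(p (t+1)).leadingCoeff‖ * (‖w‖ + r) ^ dd :=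
            eval_upper (p (t+1)) (hp0 (t+1) ht1) r (hzeros (t+1) ht1) w
        _ ≤ ‖(p (t+1)).leadingCoeff‖ * (R + r) ^ dd := by
            apply mul_le_mul_of_nonneg_left _ (norm_nonneg _)
            exact pow_le_pow_left₀ (by positivity) (by linarith) dd
        _ = Real.exp ((dd:ℝ) * (L (t+1) + Real.log (R + r))) := by
            rw [mul_add, hdL (t+1) ht1, Real.exp_add, Real.exp_log (hapos (t+1) ht1),
              Real.exp_nat_mul, Real.exp_log (by linarith : (0:ℝ) < R + r)]
        _ ≤ Real.exp ((dd:ℝ) * B2) := by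
            apply Real.exp_le_exp.mpr
            apply mul_le_mul_of_nonneg_left _ (le_of_lt hddpos)
            rw [hB2def]
            exact add_le_add_left (hLup (t+1) ht1) _
    have hmax : max 0 (Real.log (‖(compEval p (t+1) z)‖)) ≤ (dd:ℝ) * B2 := by
      rw [logplus_eq _ (norm_nonneg _), hFt]
      have h1e : (1:ℝ) ≤ Real.exp ((dd:ℝ) * B2) := Real.one_le_exp (by positivity)
      have hle : max 1 (‖((p (t+1)).eval w)‖) ≤ Real.exp ((dd:ℝ) * B2) :=
        max_le h1e habs
      calc Real.log (max 1 (‖((p (t+1)).eval w)‖))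
          ≤ Real.log (Real.exp ((dd:ℝ) * B2)) :=
            Real.log_le_log (lt_of_lt_of_le one_pos (le_max_left _ _)) hle
        _ = (dd:ℝ) * B2 := Real.log_exp _
    have hDt : (0:ℝ) < (Dn t : ℝ) := by exact_mod_cast hDpos t
    have harith : (1 / (Dn (t+1) : ℝ)) * ((dd:ℝ) * B2) = (1/(Dn t : ℝ)) * B2 := by
      rw [hDsucc t, ← hdddef]
      push_cast
      field_simp
    have hDnn : (0:ℝ) ≤ 1 / (Dn (t+1) : ℝ) := by
      have : (0:ℝ) < (Dn (t+1) : ℝ) := by exact_mod_cast hDpos (t+1)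
      positivity
    calc f (t+1) z ≤ (1 / (Dn (t+1) : ℝ)) * ((dd:ℝ) * B2) := by
          rw [hfD]
          exact mul_le_mul_of_nonneg_left hmax hDnn
      _ = (1/(Dn t : ℝ)) * B2 := harith
      _ ≤ (2*(1/2)^t) * B2 := mul_le_mul_of_nonneg_right (hDbound t ht) hB2pos
      _ = 2 * B2 * (1/2)^t := by ring
  -- telescoping along escaped orbits
  have key1 : ∀ k, N ≤ k → ∀ z : ℂ, R ≤ ‖compEval p k z‖ →
      ∀ n, k ≤ n → R ≤ ‖compEval p n z‖ ∧
        |f n z - f k z| ≤ 4*B1*(1/2)^k - 4*B1*(1/2)^n := by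
    intro k hk z hzk n hn
    induction n, hn using Nat.le_induction with
    | base => exact ⟨hzk, by simp⟩
    | succ n hn ih =>
      obtain ⟨hRn, hdiff⟩ := ih
      set w : ℂ := compEval p n z with hwdef
      have hn1 : 1 ≤ n := by omega
      have hNn1 : N ≤ n + 1 := by omega
      have hGn := hG (n+1) hNn1 w hRn
      have he1 : (1:ℝ) ≤ Real.exp 1 := Real.one_le_exp (by norm_num)
      have hw1 : (1:ℝ) ≤ ‖w‖ := le_trans hR1 hRn
      have hcomp : compEval p (n+1) z = (p (n+1)).eval w := rfl
      have hRsucc : R ≤ ‖(compEval p (n+1) z)‖ := by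
        rw [hcomp]
        have hh2 : ‖w‖ ≤ Real.exp 1 * ‖w‖ := by nlinarith
        calc R ≤ ‖w‖ := hRn
          _ ≤ Real.exp 1 * ‖w‖ := hh2
          _ ≤ _ := hGn
      refine ⟨hRsucc, ?_⟩
      have hpw1 : (1:ℝ) ≤ ‖((p (n+1)).eval w)‖ := by
        rw [← hcomp]; exact le_trans hR1 hRsucc
      have hflog : f n z = (1/(Dn n:ℝ)) * Real.log (‖w‖) := by
        rw [hfD, max_eq_right (Real.log_nonneg hw1)]
      have hflog2 : f (n+1) z
          = (1/(Dn (n+1):ℝ)) * Real.log (‖((p (n+1)).eval w)‖) := by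
        rw [hfD, hcomp, max_eq_right (Real.log_nonneg hpw1)]
      have hddpos : (0:ℝ) < ((p (n+1)).natDegree:ℝ) := hdpos (n+1) (by omega)
      have hDnpos : (0:ℝ) < (Dn n : ℝ) := by exact_mod_cast hDpos n
      have heq : f (n+1) z - f n z = (1/(Dn n:ℝ)) *
          ((1/((p (n+1)).natDegree:ℝ)) * Real.log (‖((p (n+1)).eval w)‖)
            - Real.log (‖w‖)) := by
        rw [hflog, hflog2, hDsucc n]
        push_cast
        field_simp
      have hbracket := hS (n+1) hNn1 w hRn
      have hstep : |f (n+1) z - f n z| ≤ 2*B1*(1/2)^n := by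
        rw [heq, abs_mul, abs_of_nonneg (by positivity : (0:ℝ) ≤ 1/(Dn n:ℝ))]
        calc (1/(Dn n:ℝ)) * |(1/((p (n+1)).natDegree:ℝ))
              * Real.log (‖((p (n+1)).eval w)‖) - Real.log (‖w‖)|
            ≤ (1/(Dn n:ℝ)) * B1 := mul_le_mul_of_nonneg_left hbracket (by positivity)
          _ ≤ (2*(1/2)^n) * B1 := mul_le_mul_of_nonneg_right (hDbound n hn1) hB1pos
          _ = 2*B1*(1/2)^n := by ring
      have hpow : (4:ℝ)*B1*(1/2)^(n+1) = 2*B1*(1/2)^n := by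
        rw [pow_succ]; ring
      calc |f (n+1) z - f k z| ≤ |f (n+1) z - f n z| + |f n z - f k z| := abs_sub_le _ _ _
        _ ≤ 2*B1*(1/2)^n + (4*B1*(1/2)^k - 4*B1*(1/2)^n) := add_le_add hstep hdiff
        _ ≤ 4*B1*(1/2)^k - 4*B1*(1/2)^(n+1) := by rw [hpow]; linarith
  -- main uniform estimate
  set Cst : ℝ := 4*B1 + 2*B2 + 2*Real.log R with hCstdef
  have hCst0 : 0 ≤ Cst := by rw [hCstdef]; linarith
  have key2 : ∀ k, N ≤ k → ∀ n, k ≤ n → ∀ z : ℂ, |f n z - f k z| ≤ Cst * (1/2)^k := by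
    intro k hk n hn z
    have hk1 : 1 ≤ k := by omega
    by_cases hE : ∃ j, (k ≤ j ∧ j ≤ n) ∧ R ≤ ‖compEval p j z‖
    · set S : Set ℕ := {j : ℕ | (k ≤ j ∧ j ≤ n) ∧ R ≤ ‖compEval p j z‖} with hSdef
      have hSne : S.Nonempty := hE
      set t : ℕ := sInf S with htdef
      have htS : t ∈ S := Nat.sInf_mem hSne
      obtain ⟨⟨htk, htn⟩, htR⟩ := htS
      rcases eq_or_lt_of_le htk with heq | hlt
      · -- escaped already at k
        rw [← heq] at htR
        have hkey := (key1 k hk z htR n hn).2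
        have h1 := hpownn n
        have h2 := hpownn k
        rw [hCstdef]
        nlinarith [hB2pos, hlogR1, hpownn k]
      · -- first escape at t > k
        have hts : t - 1 + 1 = t := by omega
        have hs_not : (t-1) ∉ S := Nat.notMem_of_lt_sInf (by omega)
        have hFs : ‖(compEval p (t-1) z)‖ ≤ R := by
          by_contra hcon
          push_neg at hcon
          exact hs_not ⟨⟨by omega, by omega⟩, le_of_lt hcon⟩
        have hft : f t z ≤ 2 * B2 * (1/2)^(t-1) := by
          have := hcross (t-1) (by omega) z hFs
          rwa [hts] at this
        have hkey := (key1 t (by omega) z htR n htn).2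
        have hk_not : k ∉ S := Nat.notMem_of_lt_sInf hlt
        have hFk : ‖compEval p k z‖ ≤ R := by
          by_contra hcon
          push_neg at hcon
          exact hk_not ⟨⟨le_refl k, hn⟩, le_of_lt hcon⟩
        have hfk : f k z ≤ 2 * Real.log R * (1/2)^k := hsmall k hk1 z hFk
        have hfn : f n z ≤ f t z + 4*B1*(1/2)^t := by
          have := (abs_le.mp hkey).2
          have h3 := hpownn n
          nlinarith [hB1pos]
        have hp1 : ((1:ℝ)/2)^t ≤ (1/2)^k := hpowmono k t htk
        have hp2 : ((1:ℝ)/2)^(t-1) ≤ (1/2)^k := hpowmono k (t-1) (by omega)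
        rw [abs_le]
        constructor
        · have h4 := hf0 n z
          have h5 := hf0 k z
          rw [hCstdef]
          nlinarith [hpownn k, hB1pos, hB2pos, hlogR1]
        · have h4 := hf0 k z
          have h5 : f n z ≤ 2*B2*(1/2)^(t-1) + 4*B1*(1/2)^t := by linarith
          rw [hCstdef]
          nlinarith [hpownn k, hB1pos, hB2pos, hlogR1]
    · push_neg at hE
      have hFn : ‖compEval p n z‖ ≤ R := le_of_lt (hE n ⟨hn, le_refl n⟩)
      have hFk : ‖compEval p k z‖ ≤ R := le_of_lt (hE k ⟨le_refl k, hn⟩)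
      have hfn : f n z ≤ 2 * Real.log R * (1/2)^n := hsmall n (by omega) z hFn
      have hfk : f k z ≤ 2 * Real.log R * (1/2)^k := hsmall k hk1 z hFk
      have hp1 : ((1:ℝ)/2)^n ≤ (1/2)^k := hpowmono k n hn
      have h4 := hf0 n z
      have h5 := hf0 k z
      rw [abs_le, hCstdef]
      constructor
      · nlinarith [hpownn k, hB1pos, hB2pos, hlogR1]
      · nlinarith [hpownn k, hB1pos, hB2pos, hlogR1]
  -- conclusion
  have hhalf : Tendsto (fun k : ℕ => Cst * (1/2:ℝ)^k) atTop (nhds 0) := by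
    have h0 : Tendsto (fun k : ℕ => ((1:ℝ)/2)^k) atTop (nhds 0) :=
      tendsto_pow_atTop_nhds_zero_of_lt_one (by norm_num) (by norm_num)
    have := h0.const_mul Cst
    simpa using this
  have hlimex : ∀ z : ℂ, ∃ l : ℝ, Tendsto (fun n => f n z) atTop (nhds l) := by
    intro z
    have hcs : CauchySeq (fun n => f n z) := by
      rw [Metric.cauchySeq_iff']
      intro ε hε
      obtain ⟨K0, hK0⟩ := (Filter.eventually_atTop.mp (hhalf.eventually (gt_mem_nhds hε)))
      refine ⟨max N K0, fun n hn => ?_⟩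
      have h1 : N ≤ max N K0 := le_max_left _ _
      have h2 := key2 (max N K0) h1 n hn z
      rw [Real.dist_eq]
      calc |f n z - f (max N K0) z| ≤ Cst * (1/2)^(max N K0) := h2
        _ ≤ Cst * (1/2)^K0 :=
            mul_le_mul_of_nonneg_left (hpowmono K0 (max N K0) (le_max_right _ _)) hCst0
        _ < ε := hK0 K0 (le_refl _)
    exact cauchySeq_tendsto_of_complete hcs
  choose g hgl using hlimex
  refine ⟨g, ?_⟩
  rw [Metric.tendstoUniformly_iff]
  intro ε hε
  obtain ⟨K0, hK0⟩ := Filter.eventually_atTop.mp (hhalf.eventually (gt_mem_nhds hε))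
  rw [Filter.eventually_atTop]
  refine ⟨max N K0, fun n hn z => ?_⟩
  have hNn : N ≤ n := le_trans (le_max_left _ _) hn
  have hbound : ∀ m, n ≤ m → |f m z - f n z| ≤ Cst * (1/2)^n := fun m hm =>
    key2 n hNn m hm z
  have hlim : Tendsto (fun m => |f m z - f n z|) atTop (nhds |g z - f n z|) :=
    ((hgl z).sub tendsto_const_nhds).abs
  have hgb : |g z - f n z| ≤ Cst * (1/2)^n :=
    le_of_tendsto hlim (Filter.eventually_atTop.mpr ⟨n, hbound⟩)
  rw [Real.dist_eq]
  calc |g z - f n z| ≤ Cst * (1/2)^n := hgb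
    _ ≤ Cst * (1/2)^K0 :=
        mul_le_mul_of_nonneg_left (hpowmono K0 n (le_trans (le_max_right _ _) hn)) hCst0
    _ < ε := hK0 K0 (le_refl _)
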